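/- arXiv:1601.04295 — 6 statements merged into one kernel-verified Lean document; each statement's English description precedes it below -/
import Mathlib

section
/- Let S be a transformation semigroup on a finite set Ω containing an element t of minimal rank r (where rank means cardinality of the image). Then the image of t is a clique of size r in the kernel graph Gr(S), and the map t is a proper r-coloring of Gr(S); consequently the clique number of Gr(S) equals its chromatic number. -/
def kerGraph {Ω : Type*} (S : Set (Ω → Ω)) : SimpleGraph Ω where
  Adj v w := v ≠ w ∧ ∀ f ∈ S, f v ≠ f w
  symm := ⟨fun v w h => ⟨h.1.symm, fun f hf => (h.2 f hf).symm⟩⟩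
  loopless := ⟨fun v h => h.1 rfl⟩

/-- if t has minimal rank r in S, then the image of t is a clique
of size r in Gr(S), t is a proper r-coloring, and χ(Gr(S)) = ω(Gr(S)) = r. -/
theorem stmt1 {Ω : Type*} [Fintype Ω] [DecidableEq Ω] (S : Set (Ω → Ω))
    (hcomp : ∀ f ∈ S, ∀ g ∈ S, (f ∘ g) ∈ S)
    (t : Ω → Ω) (ht : t ∈ S)
    (hmin : ∀ f ∈ S, (Finset.univ.image t).card ≤ (Finset.univ.image f).card) :
    (kerGraph S).IsNClique (Finset.univ.image t).card (Finset.univ.image t) ∧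
    (∀ v w, (kerGraph S).Adj v w → t v ≠ t w) ∧
    (kerGraph S).chromaticNumber = ((Finset.univ.image t).card : ℕ∞) := by
  have hclique : (kerGraph S).IsClique (Finset.univ.image t) := by
    intro v hv w hw hvw
    refine ⟨hvw, fun f hf hfvw => ?_⟩
    have hft : (f ∘ t) ∈ S := hcomp f hf t ht
    have himg : (Finset.univ.image (f ∘ t)) = (Finset.univ.image t).image f := by
      ext x; simp [Finset.mem_image]
    have hlt : ((Finset.univ.image t).image f).card < (Finset.univ.image t).card := by
      refine lt_of_le_of_ne (Finset.card_image_le) ?_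
      intro heq
      have hinj := Finset.card_image_iff.mp heq
      exact hvw (hinj hv hw hfvw)
    have := hmin (f ∘ t) hft
    rw [himg] at this
    omega
  have hcol : ∀ v w, (kerGraph S).Adj v w → t v ≠ t w := by
    intro v w hadj
    exact hadj.2 t ht
  refine ⟨⟨hclique, rfl⟩, hcol, ?_⟩
  refine le_antisymm ?_ (hclique.card_le_chromaticNumber)
  have C : (kerGraph S).Coloring ↥(Finset.univ.image t) :=
    SimpleGraph.Coloring.mk
      (fun v => ⟨t v, Finset.mem_image_of_mem t (Finset.mem_univ v)⟩)
      (fun hadj h => hcol _ _ hadj (by simpa using congrArg Subtype.val h))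
  have := C.colorable.chromaticNumber_le
  rwa [Fintype.card_coe] at this
end

section
/- Let X be a simple graph on a finite vertex set. Then every automorphism of X is an automorphism of Hull(X), and every endomorphism of X is an endomorphism of Hull(X). -/
/-- `f` is an endomorphism of the simple graph `X`. -/
def isEnd {V : Type*} (X : SimpleGraph V) (f : V → V) : Prop :=
  ∀ v w, X.Adj v w → X.Adj (f v) (f w)

/-- The hull of a graph: the kernel graph of its endomorphism monoid. -/
def hull {V : Type*} (X : SimpleGraph V) : SimpleGraph V :=
  kerGraph {f | isEnd X f}

/--  is an automorphism of . -/
def isAut {V : Type*} (X : SimpleGraph V) (f : V → V) : Prop :=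
  Function.Bijective f ∧ ∀ v w, X.Adj v w ↔ X.Adj (f v) (f w)

lemma end_hull {V : Type*} (X : SimpleGraph V) (f : V → V) (hf : isEnd X f) :
    isEnd (hull X) f := by
  intro v w hvw
  refine ⟨hvw.2 f hf, fun g hg => ?_⟩
  exact hvw.2 (g ∘ f) (fun a b hab => hg _ _ (hf _ _ hab))

/-- Aut(X) ≤ Aut(Hull(X)) and End(X) ≤ End(Hull(X)). -/
theorem stmt5 {V : Type*} [Fintype V] (X : SimpleGraph V) :
    (∀ f : V → V, isAut X f → isAut (hull X) f) ∧
    (∀ f : V → V, isEnd X f → isEnd (hull X) f) := by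
  refine ⟨fun f hf => ?_, fun f hf => end_hull X f hf⟩
  obtain ⟨hbij, hiff⟩ := hf
  have hfend : isEnd X f := fun v w h => (hiff v w).mp h
  obtain ⟨g, hgf, hfg⟩ := Function.bijective_iff_has_inverse.mp hbij
  have hgend : isEnd X g := by
    intro v w h
    rw [hiff]
    rwa [hfg v, hfg w]
  refine ⟨hbij, fun v w => ⟨fun h => end_hull X f hfend v w h, fun h => ?_⟩⟩
  have := end_hull X g hgend _ _ h
  rwa [hgf v, hgf w] at this
end

section
/- The hull operation is idempotent: for any finite simple graph X, Hull(Hull(X)) = Hull(X). -/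
lemma end_subset {V : Type*} (X : SimpleGraph V) {f : V → V} (hf : isEnd X f) :
    isEnd (hull X) f := by
  intro v w hvw
  refine ⟨fun h => hvw.2 f hf (by rw [h]), fun g hg => ?_⟩
  exact fun h => hvw.2 (g ∘ f) (fun a b hab => hg _ _ (hf _ _ hab)) h

/-- the hull operation is idempotent. -/
theorem stmt6 {V : Type*} [Fintype V] (X : SimpleGraph V) :
    hull (hull X) = hull X := by
  ext v w
  constructor
  · rintro ⟨hne, h⟩
    exact ⟨hne, fun f hf => h f (end_subset X hf)⟩
  · intro h
    exact ⟨h.1, fun f hf => (hf v w h).1⟩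
end

section
/- For n ≥ 2, let X = n·K_r be the disjoint union of n copies of the complete graph K_r (r ≥ 2). Then Hull(X) = X, i.e., X is a hull: two distinct vertices are collapsed by some endomorphism of X iff they are non-adjacent in X. -/
/-- The disjoint union of n copies of K_r. -/
def unionCompleteGraphs (n r : ℕ) : SimpleGraph (Fin n × Fin r) where
  Adj v w := v.1 = w.1 ∧ v.2 ≠ w.2
  symm := ⟨fun v w h => ⟨h.1.symm, h.2.symm⟩⟩
  loopless := ⟨fun v h => h.2 rfl⟩

/-- n.K_r is a hull: two distinct vertices are collapsed by some
endomorphism iff they are non-adjacent. -/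
theorem stmt14 (n r : ℕ) (hn : 2 ≤ n) (hr : 2 ≤ r) :
    ∀ v w : Fin n × Fin r, v ≠ w →
      ((∃ f, isEnd (unionCompleteGraphs n r) f ∧ f v = f w) ↔
        ¬ (unionCompleteGraphs n r).Adj v w) := by
  intro v w hvw
  constructor
  · rintro ⟨f, hf, hcol⟩ hadj
    have := hf v w hadj
    rw [hcol] at this
    exact (unionCompleteGraphs n r).loopless.irrefl (f w) this
  · intro hna
    have h1 : v.1 ≠ w.1 := by
      intro h
      by_cases h2 : v.2 = w.2
      · exact hvw (Prod.ext h h2)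
      · exact hna ⟨h, h2⟩
    refine ⟨fun p => if p.1 = w.1 then (v.1, Equiv.swap w.2 v.2 p.2) else p, ?_, ?_⟩
    · rintro ⟨i, a⟩ ⟨j, b⟩ ⟨hij, hab⟩
      dsimp at hij ⊢
      subst hij
      by_cases h : i = w.1 <;> simp only [h, if_true, if_false]
      · exact ⟨rfl, fun e => hab ((Equiv.swap w.2 v.2).injective e)⟩
      · exact ⟨rfl, hab⟩
    · simp [h1, Equiv.swap_apply_right]
end

section
/- Let Cₙ be the cycle graph on n vertices with n even, n ≥ 6. Then Hull(Cₙ) is the complete bipartite graph K_{n/2,n/2} with parts the even-indexed and odd-indexed vertices: two distinct vertices of Cₙ are collapsed by some endomorphism iff their indices have the same parity. -/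
/-- The cycle graph on ZMod n. -/
def cycleGraph (n : ℕ) : SimpleGraph (ZMod n) where
  Adj i j := i ≠ j ∧ (j = i + 1 ∨ j = i - 1)
  symm := by
    constructor
    rintro i j ⟨h1, h2 | h2⟩
    · exact ⟨h1.symm, Or.inr (by rw [h2]; ring)⟩
    · exact ⟨h1.symm, Or.inl (by rw [h2]; ring)⟩
  loopless := ⟨fun i h => h.1 rfl⟩

/-- for even n ≥ 6, the hull of C_n is the complete bipartite
graph on the even- and odd-indexed vertices: two distinct vertices are
collapsed by some endomorphism iff their difference is even. -/
theorem stmt16 (n : ℕ) (hn : Even n) (hn6 : 6 ≤ n) :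
    ∀ v w : ZMod n, v ≠ w →
      ((∃ f, isEnd (cycleGraph n) f ∧ f v = f w) ↔ Even (v - w)) := by
  haveI : NeZero n := ⟨by omega⟩
  haveI : Fact (1 < n) := ⟨by omega⟩
  have hdvd : (2 : ℕ) ∣ n := hn.two_dvd
  set c : ZMod n →+* ZMod 2 := ZMod.castHom hdvd (ZMod 2) with hc
  have hneg : (-1 : ZMod 2) = 1 := by decide
  intro v w hvw
  constructor
  · rintro ⟨f, hf, hfvw⟩
    have step : ∀ x : ZMod n, c (f (x + 1)) = c (f x) + 1 := by
      intro x
      have hadj : (cycleGraph n).Adj x (x + 1) :=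
        ⟨fun h => one_ne_zero (left_eq_add.mp h), Or.inl rfl⟩
      rcases (hf x (x + 1) hadj).2 with h | h
      · rw [h]; simp
      · rw [h, sub_eq_add_neg, map_add, map_neg, map_one, hneg]
    have key : ∀ k : ℕ, c (f (v + (k : ZMod n))) = c (f v) + (k : ZMod 2) := by
      intro k
      induction k with
      | zero => simp
      | succ k ih =>
        have h1 : ((k + 1 : ℕ) : ZMod n) = (k : ZMod n) + 1 := by push_cast; ring
        have h2 : ((k + 1 : ℕ) : ZMod 2) = (k : ZMod 2) + 1 := by push_cast; ring
        rw [h1, h2, ← add_assoc, step (v + (k : ZMod n)), ih, add_assoc]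
    have hw : v + (((w - v).val : ℕ) : ZMod n) = w := by
      rw [ZMod.natCast_val, ZMod.cast_id]; ring
    have hkey := key (w - v).val
    rw [hw, ← hfvw] at hkey
    have h0 : (((w - v).val : ℕ) : ZMod 2) = 0 := left_eq_add.mp hkey
    have hdvd2 : (2 : ℕ) ∣ (w - v).val := by
      rwa [ZMod.natCast_eq_zero_iff] at h0
    obtain ⟨m, hm⟩ := hdvd2
    have hwv : Even (w - v) := by
      refine ⟨(m : ZMod n), ?_⟩
      have : w - v = (((w - v).val : ℕ) : ZMod n) := by
        rw [ZMod.natCast_val, ZMod.cast_id]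
      rw [this, hm]; push_cast; ring
    have := hwv.neg
    rwa [neg_sub] at this
  · rintro hev
    have two01 : ∀ a : ZMod 2, a = 0 ∨ a = 1 := by decide
    refine ⟨fun x => if c x = 0 then 0 else 1, ?_, ?_⟩
    · rintro x y ⟨hxy, h | h⟩ <;>
      · have hy : c y = c x + 1 := by
          rw [h]
          simp only [map_add, map_sub, map_neg, map_one, sub_eq_add_neg, hneg]
        show (cycleGraph n).Adj (if c x = 0 then 0 else 1) (if c y = 0 then 0 else 1)
        rcases eq_or_ne (c x) 0 with h0 | h0
        · have hy0 : c y ≠ 0 := by rw [hy, h0]; decide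
          rw [if_pos h0, if_neg hy0]
          exact ⟨zero_ne_one, Or.inl (by ring)⟩
        · have hx1 : c x = 1 := (two01 (c x)).resolve_left h0
          have hy0 : c y = 0 := by rw [hy, hx1]; decide
          rw [if_neg h0, if_pos hy0]
          exact ⟨one_ne_zero, Or.inr (by ring)⟩
    · obtain ⟨r, hr⟩ := hev
      have hcv : c v = c w := by
        have h1 : c (v - w) = 0 := by
          rw [hr, map_add]
          have h2 : c r + c r = 2 * c r := by ring
          rw [h2]
          simp [show (2 : ZMod 2) = 0 by decide]
        rw [map_sub] at h1
        exact sub_eq_zero.mp h1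
      show (if c v = 0 then (0:ZMod n) else 1) = (if c w = 0 then 0 else 1)
      rw [hcv]
end

section
/- Let Y be a finite graph that is a core. Then the complement of Y is a core if and only if the complement of the disjoint union n·Y (n copies of Y, n ≥ 1) is a core. -/
/-- A finite graph is a core if every endomorphism is an automorphism. -/
def isCore {V : Type*} (X : SimpleGraph V) : Prop :=
  ∀ f, isEnd X f → Function.Bijective f

/-- The disjoint union of n copies of the graph Y. -/
def nCopies {V : Type*} (n : ℕ) (Y : SimpleGraph V) : SimpleGraph (Fin n × V) where
  Adj v w := v.1 = w.1 ∧ Y.Adj v.2 w.2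
  symm := ⟨fun v w h => ⟨h.1.symm, h.2.symm⟩⟩
  loopless := ⟨fun v h => Y.loopless.irrefl _ h.2⟩

lemma nCopies_adj {V : Type*} (n : ℕ) (Y : SimpleGraph V) (p q : Fin n × V) :
    (nCopies n Y).Adj p q ↔ p.1 = q.1 ∧ Y.Adj p.2 q.2 := Iff.rfl

lemma isEnd_iterate {V : Type*} {X : SimpleGraph V} {f : V → V} (h : isEnd X f) (t : ℕ) :
    isEnd X (f^[t]) := by
  induction t with
  | zero => intro v w hvw; simpa using hvw
  | succ t ih =>
    intro v w hvw
    rw [Function.iterate_succ_apply', Function.iterate_succ_apply']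
    exact h _ _ (ih v w hvw)

lemma exists_idem_iterate {α : Type*} [Finite α] (f : α → α) :
    ∃ t, 0 < t ∧ ∀ x, f^[t] (f^[t] x) = f^[t] x := by
  obtain ⟨a, b, hab, heq⟩ := Finite.exists_ne_map_eq_of_infinite (fun t : ℕ => f^[t])
  -- wlog a < b
  obtain ⟨m, k, hmk, hper⟩ : ∃ m k, m < k ∧ f^[m] = f^[k] := by
    rcases hab.lt_or_gt with h | h
    · exact ⟨a, b, h, heq⟩
    · exact ⟨b, a, h, heq.symm⟩
  set p := k - m with hp
  have hp0 : 0 < p := by omega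
  have hstep : ∀ q, m ≤ q → f^[q + p] = f^[q] := by
    intro q hq
    obtain ⟨d, rfl⟩ : ∃ d, q = d + m := ⟨q - m, by omega⟩
    have h1 : d + m + p = d + k := by omega
    rw [h1, Function.iterate_add, Function.iterate_add, hper]
  have hmul : ∀ j q, m ≤ q → f^[q + j * p] = f^[q] := by
    intro j
    induction j with
    | zero => intro q hq; simp
    | succ j ih =>
      intro q hq
      have h1 : q + (j + 1) * p = (q + j * p) + p := by ring
      rw [h1, hstep _ (by omega), ih q hq]
  refine ⟨(m + 1) * p, by positivity, ?_⟩
  intro x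
  have h2 : f^[(m + 1) * p + (m + 1) * p] = f^[(m + 1) * p] := by
    have := hmul (m + 1) ((m + 1) * p) (by nlinarith)
    simpa using this
  calc f^[(m + 1) * p] (f^[(m + 1) * p] x)
      = f^[(m + 1) * p + (m + 1) * p] x := (Function.iterate_add_apply f _ _ x).symm
    _ = f^[(m + 1) * p] x := by rw [h2]

lemma bijective_of_iterate {α : Type*} {f : α → α} {t : ℕ} (ht : 0 < t)
    (hb : Function.Bijective (f^[t])) : Function.Bijective f := by
  obtain ⟨s, rfl⟩ : ∃ s, t = s + 1 := ⟨t - 1, by omega⟩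
  constructor
  · have : Function.Injective (f^[s] ∘ f) := by
      rw [← Function.iterate_succ]; exact hb.1
    exact Function.Injective.of_comp this
  · have : Function.Surjective (f ∘ f^[s]) := by
      rw [← Function.iterate_succ']; exact hb.2
    exact Function.Surjective.of_comp this

/-- for a finite core Y and n ≥ 1, the complement of Y is a core
iff the complement of n.Y is a core. -/
theorem stmt18 {V : Type*} [Fintype V] (Y : SimpleGraph V) (hY : isCore Y)
    (n : ℕ) (hn : 1 ≤ n) :
    isCore Yᶜ ↔ isCore (nCopies n Y)ᶜ := by
  classical
  constructor
  · -- Yᶜ core → (n·Y)ᶜ core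
    intro hW f hf
    obtain ⟨t, ht, hidem⟩ := exists_idem_iterate f
    set r := f^[t] with hrdef
    have hr : isEnd (nCopies n Y)ᶜ r := isEnd_iterate hf t
    -- r preserves the copy index
    have key1 : ∀ p, (r p).1 = p.1 := by
      intro p
      by_contra hne
      have hadj : (nCopies n Y)ᶜ.Adj p (r p) := by
        rw [SimpleGraph.compl_adj]
        refine ⟨fun h => hne (congrArg Prod.fst h).symm, fun h => hne h.1.symm⟩
      have h2 := hr _ _ hadj
      rw [hidem p] at h2
      exact (nCopies n Y)ᶜ.irrefl h2
    -- the induced map on each copy is an endomorphism of Yᶜ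
    set θ : Fin n → V → V := fun i a => (r (i, a)).2 with hθdef
    have hreq : ∀ i a, r (i, a) = (i, θ i a) := by
      intro i a
      have := key1 (i, a)
      exact Prod.ext this rfl
    have hθend : ∀ i, isEnd Yᶜ (θ i) := by
      intro i a b hab
      rw [SimpleGraph.compl_adj] at hab
      have hadj : (nCopies n Y)ᶜ.Adj (i, a) (i, b) := by
        rw [SimpleGraph.compl_adj]
        constructor
        · intro h; exact hab.1 (congrArg Prod.snd h)
        · intro h; exact hab.2 h.2
      have h2 := hr _ _ hadj
      rw [hreq i a, hreq i b, SimpleGraph.compl_adj] at h2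
      rw [SimpleGraph.compl_adj]
      constructor
      · intro h; exact h2.1 (by rw [h])
      · intro h; exact h2.2 ⟨rfl, h⟩
    have hθbij : ∀ i, Function.Bijective (θ i) := fun i => hW (θ i) (hθend i)
    have hrbij : Function.Bijective r := by
      constructor
      · rintro ⟨i, a⟩ ⟨j, b⟩ h
        rw [hreq i a, hreq j b] at h
        have h1 : i = j := congrArg Prod.fst h
        subst h1
        have h2 : θ i a = θ i b := by injection h
        exact Prod.ext rfl ((hθbij i).1 h2)
      · rintro ⟨i, c⟩
        obtain ⟨a, ha⟩ := (hθbij i).2 c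
        exact ⟨(i, a), by rw [hreq i a, ha]⟩
    exact bijective_of_iterate ht (hrdef ▸ hrbij)
  · -- (n·Y)ᶜ core → Yᶜ core
    intro hJ g hg
    set i0 : Fin n := ⟨0, hn⟩ with hi0
    set F : Fin n × V → Fin n × V := fun p => (p.1, g p.2) with hF
    have hFend : isEnd (nCopies n Y)ᶜ F := by
      rintro ⟨i, a⟩ ⟨j, b⟩ hadj
      rw [SimpleGraph.compl_adj] at hadj
      obtain ⟨hne, hnadj⟩ := hadj
      rw [SimpleGraph.compl_adj]
      by_cases hij : i = j
      · subst hij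
        have hab : a ≠ b := fun h => hne (by rw [h])
        have hyab : ¬Y.Adj a b := fun h => hnadj ⟨rfl, h⟩
        have := hg a b (by rw [SimpleGraph.compl_adj]; exact ⟨hab, hyab⟩)
        rw [SimpleGraph.compl_adj] at this
        constructor
        · intro h; exact this.1 (congrArg Prod.snd h)
        · intro h; exact this.2 h.2
      · constructor
        · intro h; exact hij (congrArg Prod.fst h)
        · intro h; exact hij h.1
    have hFbij := hJ F hFend
    constructor
    · intro a b hab
      have : F (i0, a) = F (i0, b) := by simp [hF, hab]
      have := hFbij.1 this
      exact congrArg Prod.snd this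
    · intro c
      obtain ⟨⟨j, a⟩, ha⟩ := hFbij.2 (i0, c)
      exact ⟨a, congrArg Prod.snd ha⟩
end
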